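/- Lemma 2: Let k be the equal opportunity control. For every game (X, λ_w, p, G, v_q, v_u, ω) and every cost-threshold pair c̄ = (c̄(w), c̄(b)), one has 𝒮_k(μ_RE, f_RE) ⊆ ℱ ⊆ k(X, μ_RE, f_RE), where 𝒮_k(μ_RE, f_RE) := argmax_{d ∈ k(X, μ_RE, f_RE)} U_F(d, μ_RE, f_RE) and ℱ is the set of fair decision policies. In words: every firm-optimal policy under the equal opportunity control is fair, and every fair policy satisfies the equal opportunity constraint. -/

import Mathlib

/-!
Formalization of the Coate–Loury statistical discrimination model with
machine-learning (contractible) beliefs, following Zhu,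
"The Impact of Equal Opportunity on Statistical Discrimination".
-/

open scoped BigOperators
open MeasureTheory

noncomputable section

attribute [local instance] Classical.propDecidable

/-- Group identities `I = {w, b}`. -/
inductive GrpI
  | w
  | b
deriving DecidableEq

instance : Fintype GrpI := ⟨{GrpI.w, GrpI.b}, fun x => by cases x <;> simp⟩

/-- Classes `Y = {q, u}` (qualified / unqualified). -/
inductive Cls
  | q
  | u
deriving DecidableEq

instance : Fintype Cls := ⟨{Cls.q, Cls.u}, fun x => by cases x <;> simp⟩

/-- A game `(X, λ_w, p, G, v_q, v_u, ω)` of the Coate–Loury model.  The set of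
other features is the finite product `X = X_1 × ⋯ × X_N`, encoded as the pi type
`(j : Fin N) → Xs j`.  The statistical model (Assumption 1) is encoded through a
nonempty subset `Ysub ⊆ {1, …, N}` together with the factorization
`p(x | i, y) = pY(x_𝒴 | y) · pC(x_{-𝒴} | i, x_𝒴)`.  The cost distribution is
given by an everywhere positive density `g` with `∫ g = 1` and `∫ |c| g(c) dc < ∞`. -/
structure Game (N : ℕ) (Xs : Fin N → Type) [∀ j, Fintype (Xs j)]
    [∀ j, Nonempty (Xs j)] where
  lamw : ℝ
  lamw_pos : 0 < lamw
  lamw_lt_one : lamw < 1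
  Ysub : Finset (Fin N)
  Ysub_nonempty : Ysub.Nonempty
  pY : ((j : Ysub) → Xs j.1) → Cls → ℝ
  pC : GrpI → ((j : Fin N) → Xs j) → ℝ
  pY_pos : ∀ xY y, 0 < pY xY y
  pC_pos : ∀ i x, 0 < pC i x
  pY_sum : ∀ y, ∑ xY, pY xY y = 1
  pC_sum : ∀ (i : GrpI) (xY : (j : Ysub) → Xs j.1),
    ∑ x ∈ Finset.univ.filter
        (fun x : (j : Fin N) → Xs j => (fun j : Ysub => x j.1) = xY),
      pC i x = 1
  g : ℝ → ℝ
  g_pos : ∀ c, 0 < g c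
  g_int : Integrable g
  g_norm : (∫ c, g c) = 1
  g_abs_int : Integrable fun c => |c| * g c
  vq : ℝ
  vu : ℝ
  om : ℝ
  vq_pos : 0 < vq
  vu_pos : 0 < vu
  om_pos : 0 < om

section Policies

variable {N : ℕ} {Xs : Fin N → Type}

/-- A decision policy `d : I × X → [0,1]`. -/
def IsPolicy (d : GrpI → ((j : Fin N) → Xs j) → ℝ) : Prop :=
  ∀ i x, d i x ∈ Set.Icc (0 : ℝ) 1

/-- A decision policy when data is color-blind, `d_cb : X → [0,1]`. -/
def IsCbPolicy (dcb : ((j : Fin N) → Xs j) → ℝ) : Prop :=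
  ∀ x, dcb x ∈ Set.Icc (0 : ℝ) 1

/-- `S ⊆ {1, …, N}` has the dependence property for the belief `f`:
`f` depends on `(i, x)` only up to `(i, x_S)`. -/
def DepProp {I : Type} (f : I → ((j : Fin N) → Xs j) → ℝ)
    (S : Finset (Fin N)) : Prop :=
  ∀ (i : I) (x x' : (j : Fin N) → Xs j), (∀ j ∈ S, x j = x' j) → f i x = f i x'

/-- The minimal subset `Ŷ(f)` with the dependence property. -/
def minDep {I : Type} (f : I → ((j : Fin N) → Xs j) → ℝ) : Finset (Fin N) :=
  Finset.univ.filter fun j => ∀ S : Finset (Fin N), DepProp f S → j ∈ S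

variable [∀ j, Fintype (Xs j)]

/-- Full-support probability distributions on `I × X` (the set `Δ°(I × X)`). -/
def FullSupp (μ : GrpI → ((j : Fin N) → Xs j) → ℝ) : Prop :=
  (∀ i x, 0 < μ i x) ∧ ∑ i, ∑ x, μ i x = 1

/-- Beliefs valued in `(0, 1)`. -/
def OpenBelief (f : GrpI → ((j : Fin N) → Xs j) → ℝ) : Prop :=
  ∀ i x, f i x ∈ Set.Ioo (0 : ℝ) 1

/-- Acceptance rate of group `i`. -/
def AR (i : GrpI) (d μ : GrpI → ((j : Fin N) → Xs j) → ℝ) : ℝ :=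
  (∑ x, d i x * μ i x) / ∑ x, μ i x

/-- True positive rate of group `i`. -/
def TP (i : GrpI) (d μ f : GrpI → ((j : Fin N) → Xs j) → ℝ) : ℝ :=
  (∑ x, d i x * μ i x * f i x) / ∑ x, μ i x * f i x

/-- The equal opportunity control `k(X, μ, f)`. -/
def EOset (μ f : GrpI → ((j : Fin N) → Xs j) → ℝ) :
    Set (GrpI → ((j : Fin N) → Xs j) → ℝ) :=
  {d | IsPolicy d ∧ TP GrpI.w d μ f = TP GrpI.b d μ f}

/-- The color-blind control: all color-blind decision policies. -/
def CBset : Set (GrpI → ((j : Fin N) → Xs j) → ℝ) :=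
  {d | IsPolicy d ∧ ∀ x, d GrpI.w x = d GrpI.b x}

/-- The no proxies control: policies depending on `(i,x)` only through `x_{Ŷ(f)}`. -/
def NoProxies (_μ f : GrpI → ((j : Fin N) → Xs j) → ℝ) :
    Set (GrpI → ((j : Fin N) → Xs j) → ℝ) :=
  {d | IsPolicy d ∧
    ∀ i i' x x', (∀ j ∈ minDep f, x j = x' j) → d i x = d i' x'}

/-- `ℓ²` distance between decision policies. -/
def polDist (d d' : GrpI → ((j : Fin N) → Xs j) → ℝ) : ℝ :=
  Real.sqrt (∑ i, ∑ x, (d i x - d' i x) ^ 2)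

/-- `ℓ²` distance between pairs `(μ, f)`. -/
def pairDist (μ f μ' f' : GrpI → ((j : Fin N) → Xs j) → ℝ) : ℝ :=
  Real.sqrt ((∑ i, ∑ x, (μ i x - μ' i x) ^ 2) + ∑ i, ∑ x, (f i x - f' i x) ^ 2)

/-- `ℓ²` distance between strategy profiles `(c̄, d)`. -/
def profDist (c : GrpI → ℝ) (d : GrpI → ((j : Fin N) → Xs j) → ℝ)
    (c' : GrpI → ℝ) (d' : GrpI → ((j : Fin N) → Xs j) → ℝ) : ℝ :=
  Real.sqrt ((∑ i, (c i - c' i) ^ 2) + ∑ i, ∑ x, (d i x - d' i x) ^ 2)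

end Policies

/-- Upper hemicontinuity of a correspondence on a set. -/
def UpperHemicontinuousOnCorr {α β : Type*} [TopologicalSpace α] [TopologicalSpace β]
    (F : α → Set β) (S : Set α) : Prop :=
  ∀ a ∈ S, ∀ V : Set β, IsOpen V → F a ⊆ V → ∀ᶠ a' in nhdsWithin a S, F a' ⊆ V

/-- Lower hemicontinuity of a correspondence on a set. -/
def LowerHemicontinuousOnCorr {α β : Type*} [TopologicalSpace α] [TopologicalSpace β]
    (F : α → Set β) (S : Set α) : Prop :=
  ∀ a ∈ S, ∀ V : Set β, IsOpen V → (F a ∩ V).Nonempty →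
    ∀ᶠ a' in nhdsWithin a S, (F a' ∩ V).Nonempty

namespace Game

variable {N : ℕ} {Xs : Fin N → Type} [∀ j, Fintype (Xs j)] [∀ j, Nonempty (Xs j)]
variable (Γ : Game N Xs)

/-- Projection `x ↦ x_𝒴`. -/
def proj (x : (j : Fin N) → Xs j) : (j : Γ.Ysub) → Xs j.1 := fun j => x j.1

/-- `p(x | i, y) = p(x_𝒴 | y) · p(x_{-𝒴} | i, x_𝒴)`. -/
def p (i : GrpI) (x : (j : Fin N) → Xs j) (y : Cls) : ℝ :=
  Γ.pY (Γ.proj x) y * Γ.pC i x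

/-- Group probabilities `λ_w`, `λ_b = 1 - λ_w`. -/
def lam : GrpI → ℝ := fun i =>
  match i with
  | GrpI.w => Γ.lamw
  | GrpI.b => 1 - Γ.lamw

/-- The CDF `G` of the cost distribution. -/
def G (c : ℝ) : ℝ := ∫ t in Set.Iic c, Γ.g t

/-- The likelihood function `l(x) = p(x_𝒴 | q) / p(x_𝒴 | u)`. -/
def lhd (x : (j : Fin N) → Xs j) : ℝ :=
  Γ.pY (Γ.proj x) Cls.q / Γ.pY (Γ.proj x) Cls.u

/-- The likelihood function on `X_𝒴`. -/
def lhdY (xY : (j : Γ.Ysub) → Xs j.1) : ℝ := Γ.pY xY Cls.q / Γ.pY xY Cls.u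

/-- The set of likelihood values `{l_1 < … < l_n}`. -/
def LVset : Set ℝ := Set.range Γ.lhd

/-- The assumption that `1` is not a likelihood value
(equivalently, `WW` is single-peaked). -/
def OneNotLV : Prop := (1 : ℝ) ∉ Γ.LVset

/-- The largest likelihood value `l_n`. -/
def lmax : ℝ := sSup Γ.LVset

/-- `⌈ℓ⌉`: the smallest likelihood value `≥ ℓ`. -/
def lceil (ℓ : ℝ) : ℝ := sInf {v | v ∈ Γ.LVset ∧ ℓ ≤ v}

/-- `⌈ℓ⌉⁻`: the next smallest likelihood value below `⌈ℓ⌉` (or `l_0 = 0`). -/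
def lceilm (ℓ : ℝ) : ℝ := sSup (insert 0 {v | v ∈ Γ.LVset ∧ v < Γ.lceil ℓ})

/-- The smallest likelihood value `> ℓ`. -/
def lnext (ℓ : ℝ) : ℝ := sInf {v | v ∈ Γ.LVset ∧ ℓ < v}

/-- The true distribution of features `μ_RE` given cost thresholds `c̄`. -/
def muRE (c : GrpI → ℝ) (i : GrpI) (x : (j : Fin N) → Xs j) : ℝ :=
  Γ.lam i * (Γ.G (c i) * Γ.p i x Cls.q + (1 - Γ.G (c i)) * Γ.p i x Cls.u)

/-- The true conditional probability (calibrated belief) `f_RE` given `c̄`. -/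
def fRE (c : GrpI → ℝ) (i : GrpI) (x : (j : Fin N) → Xs j) : ℝ :=
  Γ.G (c i) * Γ.p i x Cls.q /
    (Γ.G (c i) * Γ.p i x Cls.q + (1 - Γ.G (c i)) * Γ.p i x Cls.u)

/-- Utility `U_i(c̄(i), d(i))` of the representative `i`-applicant. -/
def Uapp (i : GrpI) (ci : ℝ) (di : ((j : Fin N) → Xs j) → ℝ) : ℝ :=
  Γ.om * ∑ x, (Γ.G ci * Γ.p i x Cls.q + (1 - Γ.G ci) * Γ.p i x Cls.u) * di x -
    ∫ t in Set.Iic ci, t * Γ.g t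

/-- Firm utility `U_F(d, μ, f)`. -/
def UF (d μ f : GrpI → ((j : Fin N) → Xs j) → ℝ) : ℝ :=
  ∑ i, ∑ x, d i x * μ i x * (f i x * Γ.vq - (1 - f i x) * Γ.vu)

/-- The color-blind true distribution of features `μ_cb,RE`. -/
def mucbRE (c : GrpI → ℝ) (x : (j : Fin N) → Xs j) : ℝ :=
  Γ.muRE c GrpI.w x + Γ.muRE c GrpI.b x

/-- The color-blind true conditional probability `f_cb,RE`. -/
def fcbRE (c : GrpI → ℝ) (x : (j : Fin N) → Xs j) : ℝ :=
  (Γ.muRE c GrpI.w x * Γ.fRE c GrpI.w x + Γ.muRE c GrpI.b x * Γ.fRE c GrpI.b x) /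
    Γ.mucbRE c x

/-- Firm utility when data is color-blind. -/
def UFcb (dcb μcb fcb : ((j : Fin N) → Xs j) → ℝ) : ℝ :=
  ∑ x, dcb x * μcb x * (fcb x * Γ.vq - (1 - fcb x) * Γ.vu)

/-- `d(i | l_m)`: conditional acceptance probability at likelihood value `lv`. -/
def dcond (i : GrpI) (di : ((j : Fin N) → Xs j) → ℝ) (lv : ℝ) : ℝ :=
  (∑ x ∈ Finset.univ.filter (fun x => Γ.lhd x = lv), Γ.p i x Cls.q * di x) /
    ∑ x ∈ Finset.univ.filter (fun x => Γ.lhd x = lv), Γ.p i x Cls.q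

/-- The within-group policy `d(i)` is associated with the likelihood mixture `ℓ`. -/
def AssociatedWith (i : GrpI) (di : ((j : Fin N) → Xs j) → ℝ) (ℓ : ℝ) : Prop :=
  0 ≤ ℓ ∧ ℓ ≤ Γ.lmax ∧
    ∀ lv ∈ Γ.LVset,
      (Γ.lceil ℓ < lv → Γ.dcond i di lv = 1) ∧
      (lv = Γ.lceil ℓ →
        Γ.dcond i di lv = (Γ.lceil ℓ - ℓ) / (Γ.lceil ℓ - Γ.lceilm ℓ)) ∧
      (lv < Γ.lceil ℓ → Γ.dcond i di lv = 0)

/-- A decision policy is fair if both within-group policies are associated with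
the same likelihood mixture. -/
def Fair (d : GrpI → ((j : Fin N) → Xs j) → ℝ) : Prop :=
  ∃ ℓ, Γ.AssociatedWith GrpI.w (d GrpI.w) ℓ ∧ Γ.AssociatedWith GrpI.b (d GrpI.b) ℓ

/-- `WW(l_m) = ω ∑_{x_𝒴 : l(x_𝒴) > l_m} (p(x_𝒴|q) - p(x_𝒴|u))`. -/
def WWval (t : ℝ) : ℝ :=
  Γ.om * ∑ xY ∈ Finset.univ.filter (fun xY => t < Γ.lhdY xY),
    (Γ.pY xY Cls.q - Γ.pY xY Cls.u)

/-- The piecewise-linear function `WW` interpolating the points `(l_m, WW(l_m))`. -/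
def WW (ℓ : ℝ) : ℝ :=
  if Γ.lceil ℓ = Γ.lceilm ℓ then Γ.WWval (Γ.lceil ℓ)
  else
    (Γ.WWval (Γ.lceilm ℓ) * (Γ.lceil ℓ - ℓ) +
        Γ.WWval (Γ.lceil ℓ) * (ℓ - Γ.lceilm ℓ)) /
      (Γ.lceil ℓ - Γ.lceilm ℓ)

/-- `EĒ(l_m)`: the unique cost with `G(EĒ(l_m)) = 1 / ((v_q/v_u) l_m + 1)`. -/
def EEbar (lv : ℝ) : ℝ := sInf {cc | 1 / (Γ.vq / Γ.vu * lv + 1) ≤ Γ.G cc}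

/-- The correspondence `EE : [0, l_n] ⇒ ℝ`. -/
def EE (ℓ : ℝ) : Set ℝ :=
  if ℓ = 0 then Set.Ici (Γ.EEbar (Γ.lceil 0))
  else if ℓ = Γ.lmax then Set.Iic (Γ.EEbar Γ.lmax)
  else if ℓ ∈ Γ.LVset then Set.Icc (Γ.EEbar (Γ.lnext ℓ)) (Γ.EEbar ℓ)
  else {Γ.EEbar (Γ.lceil ℓ)}

/-- Each representative applicant's cost threshold is a best response to `d`. -/
def BestResponds (c : GrpI → ℝ) (d : GrpI → ((j : Fin N) → Xs j) → ℝ) : Prop :=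
  ∀ (i : GrpI) (c' : ℝ), Γ.Uapp i c' (d i) ≤ Γ.Uapp i (c i) (d i)

/-- An (un-controlled) equilibrium. -/
def IsEquilibrium (c : GrpI → ℝ) (d : GrpI → ((j : Fin N) → Xs j) → ℝ) : Prop :=
  IsPolicy d ∧ Γ.BestResponds c d ∧
    ∀ d', IsPolicy d' →
      Γ.UF d' (Γ.muRE c) (Γ.fRE c) ≤ Γ.UF d (Γ.muRE c) (Γ.fRE c)

/-- A `k`-controlled equilibrium, for the control `(μ, f) ↦ K μ f`. -/
def IsControlledEq
    (K : (GrpI → ((j : Fin N) → Xs j) → ℝ) → (GrpI → ((j : Fin N) → Xs j) → ℝ) →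
      Set (GrpI → ((j : Fin N) → Xs j) → ℝ))
    (c : GrpI → ℝ) (d : GrpI → ((j : Fin N) → Xs j) → ℝ) : Prop :=
  d ∈ K (Γ.muRE c) (Γ.fRE c) ∧ Γ.BestResponds c d ∧
    ∀ d' ∈ K (Γ.muRE c) (Γ.fRE c),
      Γ.UF d' (Γ.muRE c) (Γ.fRE c) ≤ Γ.UF d (Γ.muRE c) (Γ.fRE c)

/-- `𝒮_k(μ, f)`: firm-optimal policies under the control `K` at `(μ, f)`. -/
def Smax
    (K : (GrpI → ((j : Fin N) → Xs j) → ℝ) → (GrpI → ((j : Fin N) → Xs j) → ℝ) →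
      Set (GrpI → ((j : Fin N) → Xs j) → ℝ))
    (μ f : GrpI → ((j : Fin N) → Xs j) → ℝ) :
    Set (GrpI → ((j : Fin N) → Xs j) → ℝ) :=
  {d | d ∈ K μ f ∧ ∀ d' ∈ K μ f, Γ.UF d' μ f ≤ Γ.UF d μ f}

/-- A `k`-controlled `ε`-equilibrium. -/
def IsCtrlEpsEq
    (K : (GrpI → ((j : Fin N) → Xs j) → ℝ) → (GrpI → ((j : Fin N) → Xs j) → ℝ) →
      Set (GrpI → ((j : Fin N) → Xs j) → ℝ))
    (ε : ℝ) (c : GrpI → ℝ) (d : GrpI → ((j : Fin N) → Xs j) → ℝ) : Prop :=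
  ∃ μ f, FullSupp μ ∧ OpenBelief f ∧
    pairDist μ f (Γ.muRE c) (Γ.fRE c) ≤ ε ∧
    Γ.BestResponds c d ∧ d ∈ K μ f ∧ ∀ d' ∈ K μ f, Γ.UF d' μ f ≤ Γ.UF d μ f

/-- Best responses of applicants to a color-blind policy. -/
def BestRespondsCb (c : GrpI → ℝ) (dcb : ((j : Fin N) → Xs j) → ℝ) : Prop :=
  ∀ (i : GrpI) (c' : ℝ), Γ.Uapp i c' dcb ≤ Γ.Uapp i (c i) dcb

/-- An equilibrium when data is color-blind (unrestricted control). -/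
def IsCbEquilibrium (c : GrpI → ℝ) (dcb : ((j : Fin N) → Xs j) → ℝ) : Prop :=
  IsCbPolicy dcb ∧ Γ.BestRespondsCb c dcb ∧
    ∀ dcb', IsCbPolicy dcb' →
      Γ.UFcb dcb' (Γ.mucbRE c) (Γ.fcbRE c) ≤ Γ.UFcb dcb (Γ.mucbRE c) (Γ.fcbRE c)

/-- A `k_cb`-controlled equilibrium when data is color-blind. -/
def IsCbControlledEq (K : Set (((j : Fin N) → Xs j) → ℝ)) (c : GrpI → ℝ)
    (dcb : ((j : Fin N) → Xs j) → ℝ) : Prop :=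
  dcb ∈ K ∧ Γ.BestRespondsCb c dcb ∧
    ∀ dcb' ∈ K,
      Γ.UFcb dcb' (Γ.mucbRE c) (Γ.fcbRE c) ≤ Γ.UFcb dcb (Γ.mucbRE c) (Γ.fcbRE c)

end Game

/-- A control when data is color-blind: for each `X` and each
`(μ_cb, f_cb) ∈ Δ°(X) × (0,1)^X` it specifies a nonempty compact set of
color-blind decision policies. -/
structure CbControl : Type 1 where
  sets : ∀ (N : ℕ) (Xs : Fin N → Type) [∀ j, Fintype (Xs j)] [∀ j, Nonempty (Xs j)],
    (((j : Fin N) → Xs j) → ℝ) → (((j : Fin N) → Xs j) → ℝ) →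
      Set (((j : Fin N) → Xs j) → ℝ)
  nonempty : ∀ (N : ℕ) (Xs : Fin N → Type) [∀ j, Fintype (Xs j)]
    [∀ j, Nonempty (Xs j)] (μ f : ((j : Fin N) → Xs j) → ℝ),
    (∀ x, 0 < μ x) → (∑ x, μ x = 1) → (∀ x, f x ∈ Set.Ioo (0 : ℝ) 1) →
    (sets N Xs μ f).Nonempty
  compact : ∀ (N : ℕ) (Xs : Fin N → Type) [∀ j, Fintype (Xs j)]
    [∀ j, Nonempty (Xs j)] (μ f : ((j : Fin N) → Xs j) → ℝ),
    (∀ x, 0 < μ x) → (∑ x, μ x = 1) → (∀ x, f x ∈ Set.Ioo (0 : ℝ) 1) →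
    IsCompact (sets N Xs μ f)
  mem_policy : ∀ (N : ℕ) (Xs : Fin N → Type) [∀ j, Fintype (Xs j)]
    [∀ j, Nonempty (Xs j)] (μ f : ((j : Fin N) → Xs j) → ℝ),
    (∀ x, 0 < μ x) → (∑ x, μ x = 1) → (∀ x, f x ∈ Set.Ioo (0 : ℝ) 1) →
    sets N Xs μ f ⊆ {dcb | IsCbPolicy dcb}


namespace Lemma2

open Finset

variable {N : ℕ} {Xs : Fin N → Type} [∀ j, Fintype (Xs j)] [∀ j, Nonempty (Xs j)]
  (Γ : Game N Xs)

/-- The finset of likelihood values. -/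
def V : Finset ℝ := Finset.univ.image Γ.lhd

lemma mem_V_iff {lv : ℝ} : lv ∈ V Γ ↔ lv ∈ Γ.LVset := by
  simp [V, Game.LVset, Set.mem_range, eq_comm]

/-- The likelihood class of `lv`. -/
def cls (lv : ℝ) : Finset ((j : Fin N) → Xs j) :=
  Finset.univ.filter (fun x => Γ.lhd x = lv)

/-- The total `q`-probability of a likelihood class. -/
def wq (lv : ℝ) : ℝ :=
  ∑ xY ∈ Finset.univ.filter (fun xY => Γ.lhdY xY = lv), Γ.pY xY Cls.q

/-- The numerator of `dcond`. -/
def num (i : GrpI) (di : ((j : Fin N) → Xs j) → ℝ) (lv : ℝ) : ℝ :=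
  ∑ x ∈ cls Γ lv, Γ.p i x Cls.q * di x

lemma lam_pos (i : GrpI) : 0 < Γ.lam i := by
  cases i <;> simp [Game.lam] <;> linarith [Γ.lamw_pos, Γ.lamw_lt_one]

lemma g_supp : Function.support Γ.g = Set.univ := by
  ext t; simp [Function.support, (Γ.g_pos t).ne']

lemma setInt_pos {s : Set ℝ} (hvol : 0 < MeasureTheory.volume s) :
    0 < ∫ t in s, Γ.g t := by
  rw [MeasureTheory.setIntegral_pos_iff_support_of_nonneg_ae
    (MeasureTheory.ae_of_all _ fun t => (Γ.g_pos t).le) Γ.g_int.integrableOn]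
  rw [g_supp, Set.univ_inter]
  exact hvol

lemma G_pos (t : ℝ) : 0 < Γ.G t := by
  rw [Game.G]
  exact setInt_pos Γ (by simp [Real.volume_Iic])

lemma G_lt_one (t : ℝ) : Γ.G t < 1 := by
  have h := MeasureTheory.integral_add_compl (measurableSet_Iic (a := t)) Γ.g_int
  rw [Γ.g_norm] at h
  have h2 : 0 < ∫ s in (Set.Iic t)ᶜ, Γ.g s := by
    refine setInt_pos Γ ?_
    rw [Set.compl_Iic]
    simp [Real.volume_Ioi]
  have : Γ.G t = ∫ s in Set.Iic t, Γ.g s := rfl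
  linarith

lemma p_pos (i : GrpI) (x : (j : Fin N) → Xs j) (y : Cls) : 0 < Γ.p i x y :=
  mul_pos (Γ.pY_pos _ _) (Γ.pC_pos _ _)

lemma lhd_pos (x : (j : Fin N) → Xs j) : 0 < Γ.lhd x :=
  div_pos (Γ.pY_pos _ _) (Γ.pY_pos _ _)

lemma LVset_pos : ∀ v ∈ Γ.LVset, 0 < v := by
  rintro v ⟨x, rfl⟩; exact lhd_pos Γ x

lemma LVset_finite : Γ.LVset.Finite := Set.finite_range _

lemma LVset_nonempty : Γ.LVset.Nonempty :=
  ⟨Γ.lhd (Classical.arbitrary _), ⟨Classical.arbitrary _, rfl⟩⟩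

lemma sum_proj (i : GrpI) (φ : ((j : Γ.Ysub) → Xs j.1) → ℝ) :
    ∑ x, φ (Γ.proj x) * Γ.pC i x = ∑ xY, φ xY := by
  rw [← Finset.sum_fiberwise Finset.univ (fun x => Γ.proj x)
    (fun x => φ (Γ.proj x) * Γ.pC i x)]
  refine Finset.sum_congr rfl fun xY _ => ?_
  rw [Finset.sum_congr rfl (fun x hx => by
    rw [(Finset.mem_filter.1 hx).2] :
      ∀ x ∈ Finset.univ.filter (fun x => Γ.proj x = xY),
        φ (Γ.proj x) * Γ.pC i x = φ xY * Γ.pC i x), ← Finset.mul_sum]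
  have hsum : (∑ x ∈ Finset.univ.filter (fun x => Γ.proj x = xY), Γ.pC i x) = 1 :=
    Γ.pC_sum i xY
  rw [hsum, mul_one]

lemma sum_p_one (i : GrpI) (y : Cls) : ∑ x, Γ.p i x y = 1 := by
  have h := sum_proj Γ i (fun xY => Γ.pY xY y)
  simpa [Game.p, Γ.pY_sum y] using h

lemma sum_cls_q (i : GrpI) (lv : ℝ) :
    ∑ x ∈ cls Γ lv, Γ.p i x Cls.q = wq Γ lv := by
  have key := sum_proj Γ i (fun xY => if Γ.lhdY xY = lv then Γ.pY xY Cls.q else 0)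
  rw [cls, Finset.sum_filter, wq, Finset.sum_filter, ← key]
  refine Finset.sum_congr rfl fun x _ => ?_
  by_cases h : Γ.lhd x = lv
  · have h' : Γ.lhdY (Γ.proj x) = lv := h
    simp [h, h', Game.p]
  · have h' : ¬ Γ.lhdY (Γ.proj x) = lv := h
    simp [h, h']

lemma p_q_eq {x : (j : Fin N) → Xs j} {lv : ℝ} (h : Γ.lhd x = lv) (i : GrpI) :
    Γ.p i x Cls.q = lv * Γ.p i x Cls.u := by
  have hu := Γ.pY_pos (Γ.proj x) Cls.u
  have hq : Γ.pY (Γ.proj x) Cls.q = lv * Γ.pY (Γ.proj x) Cls.u :=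
    (div_eq_iff hu.ne').1 h
  rw [Game.p, Game.p, hq]; ring

lemma wq_pos {lv : ℝ} (h : lv ∈ V Γ) : 0 < wq Γ lv := by
  rw [V, Finset.mem_image] at h
  obtain ⟨x, -, rfl⟩ := h
  refine Finset.sum_pos (fun xY _ => Γ.pY_pos _ _) ⟨Γ.proj x, ?_⟩
  refine Finset.mem_filter.2 ⟨Finset.mem_univ _, rfl⟩

lemma partition (F : ((j : Fin N) → Xs j) → ℝ) :
    ∑ x, F x = ∑ lv ∈ V Γ, ∑ x ∈ cls Γ lv, F x :=
  (Finset.sum_fiberwise_of_maps_to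
    (fun x _ => Finset.mem_image_of_mem _ (Finset.mem_univ x)) F).symm

lemma D_pos (c : GrpI → ℝ) (i : GrpI) (x : (j : Fin N) → Xs j) :
    0 < Γ.G (c i) * Γ.p i x Cls.q + (1 - Γ.G (c i)) * Γ.p i x Cls.u :=
  add_pos (mul_pos (G_pos Γ _) (p_pos Γ _ _ _))
    (mul_pos (by linarith [G_lt_one Γ (c i)]) (p_pos Γ _ _ _))

lemma muf (c : GrpI → ℝ) (i : GrpI) (x : (j : Fin N) → Xs j) :
    Γ.muRE c i x * Γ.fRE c i x = Γ.lam i * Γ.G (c i) * Γ.p i x Cls.q := by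
  have hD := (D_pos Γ c i x).ne'
  rw [Game.muRE, Game.fRE]
  field_simp

lemma weight (c : GrpI → ℝ) (i : GrpI) (x : (j : Fin N) → Xs j) :
    Γ.muRE c i x * (Γ.fRE c i x * Γ.vq - (1 - Γ.fRE c i x) * Γ.vu)
      = Γ.lam i * (Γ.G (c i) * Γ.vq * Γ.p i x Cls.q
          - (1 - Γ.G (c i)) * Γ.vu * Γ.p i x Cls.u) := by
  have hD := (D_pos Γ c i x).ne'
  rw [Game.muRE, Game.fRE]
  field_simp
  ring

lemma TP_eq (c : GrpI → ℝ) (d : GrpI → ((j : Fin N) → Xs j) → ℝ) (i : GrpI) :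
    TP i d (Γ.muRE c) (Γ.fRE c) = ∑ x, Γ.p i x Cls.q * d i x := by
  have hGl : Γ.lam i * Γ.G (c i) ≠ 0 := (mul_pos (lam_pos Γ i) (G_pos Γ _)).ne'
  rw [TP]
  rw [Finset.sum_congr rfl (fun x _ => by
    rw [mul_assoc, muf Γ c i x]; ring :
    ∀ x ∈ Finset.univ, d i x * Γ.muRE c i x * Γ.fRE c i x
      = Γ.lam i * Γ.G (c i) * (Γ.p i x Cls.q * d i x))]
  rw [Finset.sum_congr rfl (fun x _ => by rw [muf Γ c i x] :
    ∀ x ∈ Finset.univ, Γ.muRE c i x * Γ.fRE c i x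
      = Γ.lam i * Γ.G (c i) * Γ.p i x Cls.q)]
  rw [← Finset.mul_sum, ← Finset.mul_sum, sum_p_one Γ i Cls.q, mul_one]
  exact mul_div_cancel_left₀ _ hGl

lemma dcond_eq (i : GrpI) (di : ((j : Fin N) → Xs j) → ℝ) (lv : ℝ) :
    Γ.dcond i di lv = num Γ i di lv / wq Γ lv := by
  rw [Game.dcond,
    show (Finset.univ.filter fun x => Γ.lhd x = lv) = cls Γ lv from rfl,
    sum_cls_q Γ i lv, num]

lemma num_nonneg {i : GrpI} {di : ((j : Fin N) → Xs j) → ℝ}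
    (hd : ∀ x, 0 ≤ di x) (lv : ℝ) : 0 ≤ num Γ i di lv :=
  Finset.sum_nonneg fun x _ => mul_nonneg (p_pos Γ _ _ _).le (hd x)

lemma num_le {i : GrpI} {di : ((j : Fin N) → Xs j) → ℝ}
    (hd : ∀ x, di x ≤ 1) (lv : ℝ) : num Γ i di lv ≤ wq Γ lv := by
  rw [← sum_cls_q Γ i lv]
  exact Finset.sum_le_sum fun x _ =>
    mul_le_of_le_one_right (p_pos Γ _ _ _).le (hd x)

lemma sum_two {lv lv' : ℝ} (h : lv ≠ lv') (F : ((j : Fin N) → Xs j) → ℝ)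
    (hF : ∀ x, Γ.lhd x ≠ lv → Γ.lhd x ≠ lv' → F x = 0) :
    ∑ x, F x = (∑ x ∈ cls Γ lv, F x) + ∑ x ∈ cls Γ lv', F x := by
  rw [cls, cls, Finset.sum_filter, Finset.sum_filter, ← Finset.sum_add_distrib]
  refine Finset.sum_congr rfl fun x _ => ?_
  by_cases h1 : Γ.lhd x = lv
  · have h2 : Γ.lhd x ≠ lv' := by rw [h1]; exact h
    simp only [h1, h2, if_pos rfl, if_neg h2]
    simp [h]
  · by_cases h2 : Γ.lhd x = lv'
    · simp only [h1, h2, if_neg h1, if_pos rfl]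
      rw [if_neg (fun hc => h hc.symm)]
      simp
    · simp [h1, h2, hF x h1 h2]

lemma threshold_ext (e e' : ℝ → ℝ)
    (hbd : ∀ lv ∈ V Γ, 0 ≤ e lv ∧ e lv ≤ 1)
    (hbd' : ∀ lv ∈ V Γ, 0 ≤ e' lv ∧ e' lv ≤ 1)
    (hth : ∀ lv ∈ V Γ, ∀ lv' ∈ V Γ, lv < lv' → 0 < e lv → e lv' = 1)
    (hth' : ∀ lv ∈ V Γ, ∀ lv' ∈ V Γ, lv < lv' → 0 < e' lv → e' lv' = 1)
    (hsum : ∑ lv ∈ V Γ, wq Γ lv * e lv = ∑ lv ∈ V Γ, wq Γ lv * e' lv) :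
    ∀ lv ∈ V Γ, e lv = e' lv := by
  by_contra hc
  push_neg at hc
  obtain ⟨a0, ha0, hne⟩ := hc
  have hDne : ((V Γ).filter (fun lv => e lv ≠ e' lv)).Nonempty :=
    ⟨a0, Finset.mem_filter.2 ⟨ha0, hne⟩⟩
  set a := ((V Γ).filter (fun lv => e lv ≠ e' lv)).max' hDne with ha
  have hamem := ((V Γ).filter (fun lv => e lv ≠ e' lv)).max'_mem hDne
  have haV : a ∈ V Γ := (Finset.mem_filter.1 hamem).1
  have haD : e a ≠ e' a := (Finset.mem_filter.1 hamem).2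
  have habove : ∀ lv ∈ V Γ, a < lv → e lv = e' lv := by
    intro lv hlv hal
    by_contra hne2
    exact absurd (Finset.le_max' _ lv (Finset.mem_filter.2 ⟨hlv, hne2⟩))
      (not_le.2 hal)
  have main : ∀ (f g : ℝ → ℝ),
      (∀ lv ∈ V Γ, 0 ≤ f lv ∧ f lv ≤ 1) →
      (∀ lv ∈ V Γ, 0 ≤ g lv ∧ g lv ≤ 1) →
      (∀ lv ∈ V Γ, ∀ lv' ∈ V Γ, lv < lv' → 0 < g lv → g lv' = 1) →
      (∀ lv ∈ V Γ, a < lv → f lv = g lv) → g a < f a →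
      ∑ lv ∈ V Γ, wq Γ lv * g lv < ∑ lv ∈ V Γ, wq Γ lv * f lv := by
    intro f g hf hg hgth hab hlt
    refine Finset.sum_lt_sum (fun lv hlv => ?_) ⟨a, haV,
      mul_lt_mul_of_pos_left hlt (wq_pos Γ haV)⟩
    rcases lt_trichotomy lv a with h | h | h
    · have hg0 : g lv = 0 := by
        by_contra hg0
        have hpos : 0 < g lv := lt_of_le_of_ne (hg lv hlv).1 (Ne.symm hg0)
        have h1 := hgth lv hlv a haV h hpos
        rw [h1] at hlt
        exact absurd (hf a haV).2 (not_le.2 hlt)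
      rw [hg0, mul_zero]
      exact mul_nonneg (wq_pos Γ hlv).le (hf lv hlv).1
    · subst h
      exact mul_le_mul_of_nonneg_left hlt.le (wq_pos Γ hlv).le
    · rw [hab lv hlv h]
  rcases lt_or_gt_of_ne haD with h | h
  · have := main e' e hbd' hbd hth (fun lv h1 h2 => (habove lv h1 h2).symm) h
    rw [hsum] at this
    exact lt_irrefl _ this
  · have := main e e' hbd hbd' hth' habove h
    rw [hsum] at this
    exact lt_irrefl _ this

end Lemma2

/-- **Lemma 2.** For any game and any cost-threshold pair,
`𝒮_k(μ_RE, f_RE) ⊆ ℱ ⊆ k(X, μ_RE, f_RE)`, where `k` is the equal opportunity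
control and `ℱ` is the set of fair decision policies. -/
theorem firm_optimal_subset_fair_subset_control
    {N : ℕ} {Xs : Fin N → Type} [∀ j, Fintype (Xs j)] [∀ j, Nonempty (Xs j)]
    (Γ : Game N Xs) (c : GrpI → ℝ) :
    Γ.Smax (fun μ f => EOset μ f) (Γ.muRE c) (Γ.fRE c) ⊆
        {d | IsPolicy d ∧ Γ.Fair d} ∧
      {d | IsPolicy d ∧ Γ.Fair d} ⊆ EOset (Γ.muRE c) (Γ.fRE c) := by
  constructor
  · -- Part 1: firm-optimal policies are fair
    intro d hd
    obtain ⟨⟨hdp, hTP⟩, hopt⟩ := hd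
    refine ⟨hdp, ?_⟩
    have hd0 : ∀ i x, 0 ≤ d i x := fun i x => (hdp i x).1
    have hd1 : ∀ i x, d i x ≤ 1 := fun i x => (hdp i x).2
    have hbd : ∀ (i : GrpI), ∀ lv ∈ Lemma2.V Γ,
        0 ≤ Γ.dcond i (d i) lv ∧ Γ.dcond i (d i) lv ≤ 1 := by
      intro i lv hlv
      rw [Lemma2.dcond_eq]
      refine ⟨div_nonneg (Lemma2.num_nonneg Γ (hd0 i) lv)
        (Lemma2.wq_pos Γ hlv).le, ?_⟩
      rw [div_le_one (Lemma2.wq_pos Γ hlv)]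
      exact Lemma2.num_le Γ (hd1 i) lv
    -- The threshold property, via an exchange argument
    have hth : ∀ (i : GrpI), ∀ lv ∈ Lemma2.V Γ, ∀ lv' ∈ Lemma2.V Γ, lv < lv' →
        0 < Γ.dcond i (d i) lv → Γ.dcond i (d i) lv' = 1 := by
      intro i lv hlv lv' hlv' hlt hposd
      by_contra hne1
      have hwq := Lemma2.wq_pos Γ hlv
      have hwq' := Lemma2.wq_pos Γ hlv'
      have hlvpos : 0 < lv := Lemma2.LVset_pos Γ lv ((Lemma2.mem_V_iff Γ).1 hlv)
      have hlvpos' : 0 < lv' := Lemma2.LVset_pos Γ lv' ((Lemma2.mem_V_iff Γ).1 hlv')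
      have hne_lv : lv ≠ lv' := ne_of_lt hlt
      rw [Lemma2.dcond_eq] at hposd hne1
      have hA : 0 < Lemma2.num Γ i (d i) lv := by
        rcases div_pos_iff.1 hposd with ⟨h, -⟩ | ⟨-, h⟩
        · exact h
        · linarith
      have hB : Lemma2.num Γ i (d i) lv' < Lemma2.wq Γ lv' := by
        refine lt_of_le_of_ne (Lemma2.num_le Γ (hd1 i) lv') fun he => hne1 ?_
        rw [he, div_self hwq'.ne']
      have hBpos : 0 < Lemma2.wq Γ lv' - Lemma2.num Γ i (d i) lv' := sub_pos.2 hB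
      set m := min (Lemma2.num Γ i (d i) lv)
        (Lemma2.wq Γ lv' - Lemma2.num Γ i (d i) lv') with hm_def
      have hm : 0 < m := lt_min hA hBpos
      set t := m / Lemma2.num Γ i (d i) lv with ht_def
      set s := m / (Lemma2.wq Γ lv' - Lemma2.num Γ i (d i) lv') with hs_def
      have ht0 : 0 < t := div_pos hm hA
      have ht1 : t ≤ 1 := (div_le_one hA).2 (min_le_left _ _)
      have hs0 : 0 < s := div_pos hm hBpos
      have hs1 : s ≤ 1 := (div_le_one hBpos).2 (min_le_right _ _)
      have htA : t * Lemma2.num Γ i (d i) lv = m := div_mul_cancel₀ m hA.ne'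
      have hsB : s * (Lemma2.wq Γ lv' - Lemma2.num Γ i (d i) lv') = m :=
        div_mul_cancel₀ m hBpos.ne'
      set di' : ((j : Fin N) → Xs j) → ℝ := fun x =>
        if Γ.lhd x = lv then (1 - t) * d i x
        else if Γ.lhd x = lv' then d i x + s * (1 - d i x) else d i x with hdi'
      set d' := Function.update d i di' with hd'
      have hd'i : d' i = di' := Function.update_self i di' d
      have hd'ne : ∀ i', i' ≠ i → d' i' = d i' := fun i' hne =>
        Function.update_of_ne hne di' d
      have hd'p : IsPolicy d' := by
        intro i' x
        by_cases hii : i' = i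
        · rw [hii, hd'i, hdi']
          dsimp only
          split_ifs with h1 h2
          · exact ⟨mul_nonneg (by linarith) (hd0 i x),
              mul_le_one₀ (by linarith) (hd0 i x) (hd1 i x)⟩
          · refine ⟨add_nonneg (hd0 i x)
              (mul_nonneg hs0.le (by linarith [hd1 i x])), ?_⟩
            nlinarith [mul_nonneg (sub_nonneg.2 hs1) (sub_nonneg.2 (hd1 i x))]
          · exact hdp i x
        · rw [hd'ne i' hii]; exact hdp i' x
      have hTsame : ∑ x, Γ.p i x Cls.q * di' x = ∑ x, Γ.p i x Cls.q * d i x := by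
        have hzero : ∀ x, Γ.lhd x ≠ lv → Γ.lhd x ≠ lv' →
            Γ.p i x Cls.q * di' x - Γ.p i x Cls.q * d i x = 0 := by
          intro x h1 h2
          rw [hdi']
          dsimp only
          rw [if_neg h1, if_neg h2]
          ring
        have hsplit := Lemma2.sum_two Γ hne_lv
          (fun x => Γ.p i x Cls.q * di' x - Γ.p i x Cls.q * d i x) hzero
        have hc1 : (∑ x ∈ Lemma2.cls Γ lv,
            (Γ.p i x Cls.q * di' x - Γ.p i x Cls.q * d i x))
            = -t * Lemma2.num Γ i (d i) lv := by
          rw [Lemma2.num, Finset.mul_sum]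
          refine Finset.sum_congr rfl fun x hx => ?_
          have hx1 : Γ.lhd x = lv := (Finset.mem_filter.1 hx).2
          rw [hdi']
          dsimp only
          rw [if_pos hx1]
          ring
        have hc2 : (∑ x ∈ Lemma2.cls Γ lv',
            (Γ.p i x Cls.q * di' x - Γ.p i x Cls.q * d i x))
            = s * (Lemma2.wq Γ lv' - Lemma2.num Γ i (d i) lv') := by
          rw [Lemma2.num, ← Lemma2.sum_cls_q Γ i lv', ← Finset.sum_sub_distrib,
            Finset.mul_sum]
          refine Finset.sum_congr rfl fun x hx => ?_
          have hx1 : Γ.lhd x = lv' := (Finset.mem_filter.1 hx).2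
          have hx2 : Γ.lhd x ≠ lv := by rw [hx1]; exact fun hc => hne_lv hc.symm
          rw [hdi']
          dsimp only
          rw [if_neg hx2, if_pos hx1]
          ring
        rw [← sub_eq_zero, ← Finset.sum_sub_distrib, hsplit, hc1, hc2]
        linarith
      have hT' : ∀ i'', ∑ x, Γ.p i'' x Cls.q * d' i'' x
          = ∑ x, Γ.p i'' x Cls.q * d i'' x := by
        intro i''
        by_cases hii : i'' = i
        · subst hii
          simp only [hd'i]
          exact hTsame
        · rw [hd'ne i'' hii]
      have hd'EO : d' ∈ EOset (Γ.muRE c) (Γ.fRE c) := by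
        refine ⟨hd'p, ?_⟩
        rw [Lemma2.TP_eq Γ c d' GrpI.w, Lemma2.TP_eq Γ c d' GrpI.b, hT' GrpI.w,
          hT' GrpI.b, ← Lemma2.TP_eq Γ c d GrpI.w, ← Lemma2.TP_eq Γ c d GrpI.b]
        exact hTP
      -- strict improvement of firm utility
      have hdiff : Γ.UF d' (Γ.muRE c) (Γ.fRE c) - Γ.UF d (Γ.muRE c) (Γ.fRE c)
          = ∑ x, (di' x - d i x) * (Γ.lam i * (Γ.G (c i) * Γ.vq * Γ.p i x Cls.q
              - (1 - Γ.G (c i)) * Γ.vu * Γ.p i x Cls.u)) := by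
        rw [Game.UF, Game.UF, ← Finset.sum_sub_distrib]
        rw [Finset.sum_eq_single i ?_ ?_]
        · rw [← Finset.sum_sub_distrib]
          refine Finset.sum_congr rfl fun x _ => ?_
          rw [show d' i x = di' x from by rw [hd'i], mul_assoc, mul_assoc,
            Lemma2.weight Γ c i x]
          ring
        · intro i'' _ hii
          rw [hd'ne i'' hii, sub_self]
        · intro h
          exact absurd (Finset.mem_univ i) h
      have hzeroU : ∀ x, Γ.lhd x ≠ lv → Γ.lhd x ≠ lv' →
          (di' x - d i x) * (Γ.lam i * (Γ.G (c i) * Γ.vq * Γ.p i x Cls.q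
            - (1 - Γ.G (c i)) * Γ.vu * Γ.p i x Cls.u)) = 0 := by
        intro x h1 h2
        rw [hdi']
        dsimp only
        rw [if_neg h1, if_neg h2]
        ring
      have hsplitU := Lemma2.sum_two Γ hne_lv
        (fun x => (di' x - d i x) * (Γ.lam i * (Γ.G (c i) * Γ.vq * Γ.p i x Cls.q
          - (1 - Γ.G (c i)) * Γ.vu * Γ.p i x Cls.u))) hzeroU
      have hcU1 : (∑ x ∈ Lemma2.cls Γ lv, (di' x - d i x)
            * (Γ.lam i * (Γ.G (c i) * Γ.vq * Γ.p i x Cls.q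
              - (1 - Γ.G (c i)) * Γ.vu * Γ.p i x Cls.u)))
          = (-t * (Γ.lam i * (Γ.G (c i) * Γ.vq - (1 - Γ.G (c i)) * Γ.vu / lv)))
            * Lemma2.num Γ i (d i) lv := by
        rw [Lemma2.num, Finset.mul_sum]
        refine Finset.sum_congr rfl fun x hx => ?_
        have hx1 : Γ.lhd x = lv := (Finset.mem_filter.1 hx).2
        rw [hdi']
        dsimp only
        rw [if_pos hx1, Lemma2.p_q_eq Γ hx1 i]
        field_simp
        ring
      have hcU2 : (∑ x ∈ Lemma2.cls Γ lv', (di' x - d i x)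
            * (Γ.lam i * (Γ.G (c i) * Γ.vq * Γ.p i x Cls.q
              - (1 - Γ.G (c i)) * Γ.vu * Γ.p i x Cls.u)))
          = (s * (Γ.lam i * (Γ.G (c i) * Γ.vq - (1 - Γ.G (c i)) * Γ.vu / lv')))
            * (Lemma2.wq Γ lv' - Lemma2.num Γ i (d i) lv') := by
        rw [Lemma2.num, ← Lemma2.sum_cls_q Γ i lv', ← Finset.sum_sub_distrib,
          Finset.mul_sum]
        refine Finset.sum_congr rfl fun x hx => ?_
        have hx1 : Γ.lhd x = lv' := (Finset.mem_filter.1 hx).2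
        have hx2 : Γ.lhd x ≠ lv := by rw [hx1]; exact fun hc => hne_lv hc.symm
        rw [hdi']
        dsimp only
        rw [if_neg hx2, if_pos hx1, Lemma2.p_q_eq Γ hx1 i]
        field_simp
        ring
      have hG1 := Lemma2.G_lt_one Γ (c i)
      have hKpos : 0 < 1 - Γ.G (c i) := by linarith
      have hstrict : 0 < Γ.UF d' (Γ.muRE c) (Γ.fRE c)
          - Γ.UF d (Γ.muRE c) (Γ.fRE c) := by
        rw [hdiff, hsplitU, hcU1, hcU2]
        have e1 : (-t * (Γ.lam i * (Γ.G (c i) * Γ.vq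
              - (1 - Γ.G (c i)) * Γ.vu / lv))) * Lemma2.num Γ i (d i) lv
            = -(Γ.lam i * (Γ.G (c i) * Γ.vq - (1 - Γ.G (c i)) * Γ.vu / lv)) * m := by
          rw [← htA]; ring
        have e2 : (s * (Γ.lam i * (Γ.G (c i) * Γ.vq
              - (1 - Γ.G (c i)) * Γ.vu / lv')))
              * (Lemma2.wq Γ lv' - Lemma2.num Γ i (d i) lv')
            = (Γ.lam i * (Γ.G (c i) * Γ.vq - (1 - Γ.G (c i)) * Γ.vu / lv')) * m := by
          rw [← hsB]; ring
        rw [e1, e2]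
        have e3 : -(Γ.lam i * (Γ.G (c i) * Γ.vq - (1 - Γ.G (c i)) * Γ.vu / lv)) * m
              + (Γ.lam i * (Γ.G (c i) * Γ.vq - (1 - Γ.G (c i)) * Γ.vu / lv')) * m
            = Γ.lam i * m * ((1 - Γ.G (c i)) * Γ.vu) * (1 / lv - 1 / lv') := by
          ring
        rw [e3]
        have h1lv : 1 / lv' < 1 / lv := one_div_lt_one_div_of_lt hlvpos hlt
        exact mul_pos (mul_pos (mul_pos (Lemma2.lam_pos Γ i) hm)
          (mul_pos hKpos Γ.vu_pos)) (by linarith)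
      have hle := hopt d' hd'EO
      linarith
    -- sums agree between groups
    have hsum : ∑ lv ∈ Lemma2.V Γ, Lemma2.wq Γ lv * Γ.dcond GrpI.w (d GrpI.w) lv
        = ∑ lv ∈ Lemma2.V Γ, Lemma2.wq Γ lv * Γ.dcond GrpI.b (d GrpI.b) lv := by
      have key : ∀ i'', ∑ lv ∈ Lemma2.V Γ, Lemma2.wq Γ lv * Γ.dcond i'' (d i'') lv
          = TP i'' d (Γ.muRE c) (Γ.fRE c) := by
        intro i''
        rw [Lemma2.TP_eq Γ c d i'',
          Lemma2.partition Γ (fun x => Γ.p i'' x Cls.q * d i'' x)]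
        refine Finset.sum_congr rfl fun lv hlv => ?_
        rw [Lemma2.dcond_eq, mul_comm,
          div_mul_cancel₀ _ (Lemma2.wq_pos Γ hlv).ne']
        rfl
      rw [key GrpI.w, key GrpI.b, hTP]
    have hext := Lemma2.threshold_ext Γ _ _ (hbd GrpI.w) (hbd GrpI.b)
      (hth GrpI.w) (hth GrpI.b) hsum
    have hfin := Lemma2.LVset_finite Γ
    have hLVne := Lemma2.LVset_nonempty Γ
    have hLVpos := Lemma2.LVset_pos Γ
    by_cases hall : ∀ lv ∈ Lemma2.V Γ, Γ.dcond GrpI.w (d GrpI.w) lv = 1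
    · -- all ones: associated with ℓ = 0
      have hS0 : {v | v ∈ Γ.LVset ∧ (0:ℝ) ≤ v} = Γ.LVset :=
        Set.ext fun v => ⟨fun h => h.1, fun h => ⟨h, (hLVpos v h).le⟩⟩
      have hc0mem : Γ.lceil 0 ∈ Γ.LVset := by
        rw [Game.lceil, hS0]
        exact Set.Nonempty.csInf_mem hLVne hfin
      have hc0le : ∀ v ∈ Γ.LVset, Γ.lceil 0 ≤ v := by
        intro v hv
        rw [Game.lceil, hS0]
        exact csInf_le hfin.bddBelow hv
      have hc0pos : 0 < Γ.lceil 0 := hLVpos _ hc0mem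
      have hB0 : {v | v ∈ Γ.LVset ∧ v < Γ.lceil 0} = ∅ := by
        ext v
        simp only [Set.mem_setOf_eq, Set.mem_empty_iff_false, iff_false, not_and,
          not_lt]
        exact fun hv => hc0le v hv
      have hm0 : Γ.lceilm 0 = 0 := by
        rw [Game.lceilm, hB0]
        simp
      have hmax0 : (0:ℝ) ≤ Γ.lmax :=
        le_trans hc0pos.le (le_csSup hfin.bddAbove hc0mem)
      have mkA : ∀ i'', (∀ lv ∈ Lemma2.V Γ, Γ.dcond i'' (d i'') lv = 1) →
          Γ.AssociatedWith i'' (d i'') 0 := by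
        intro i'' h1
        refine ⟨le_refl 0, hmax0, fun lvv hlvvL => ?_⟩
        have hlvvV : lvv ∈ Lemma2.V Γ := (Lemma2.mem_V_iff Γ).2 hlvvL
        refine ⟨fun _ => h1 lvv hlvvV, fun _ => ?_, fun hlt2 => ?_⟩
        · rw [h1 lvv hlvvV, hm0, sub_zero]
          exact (div_self hc0pos.ne').symm
        · exact absurd hlt2 (not_lt.2 (hc0le lvv hlvvL))
      have hallb : ∀ lv ∈ Lemma2.V Γ, Γ.dcond GrpI.b (d GrpI.b) lv = 1 :=
        fun lv hlv => (hext lv hlv) ▸ hall lv hlv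
      exact ⟨0, mkA GrpI.w hall, mkA GrpI.b hallb⟩
    · push_neg at hall
      obtain ⟨lv₀, hlv₀, hne₀⟩ := hall
      have hSne : ((Lemma2.V Γ).filter
          fun lv => Γ.dcond GrpI.w (d GrpI.w) lv < 1).Nonempty :=
        ⟨lv₀, Finset.mem_filter.2 ⟨hlv₀,
          lt_of_le_of_ne (hbd GrpI.w lv₀ hlv₀).2 hne₀⟩⟩
      set a := Finset.max' _ hSne with ha_def
      have hamem := Finset.max'_mem _ hSne
      have haV : a ∈ Lemma2.V Γ := (Finset.mem_filter.1 hamem).1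
      have haLV : a ∈ Γ.LVset := (Lemma2.mem_V_iff Γ).1 haV
      have hta : Γ.dcond GrpI.w (d GrpI.w) a < 1 := (Finset.mem_filter.1 hamem).2
      have hapos : 0 < a := hLVpos a haLV
      have habove : ∀ lv ∈ Lemma2.V Γ, a < lv →
          Γ.dcond GrpI.w (d GrpI.w) lv = 1 := by
        intro lv hlv h
        by_contra hne2
        have hmem2 : lv ∈ (Lemma2.V Γ).filter
            fun lv => Γ.dcond GrpI.w (d GrpI.w) lv < 1 :=
          Finset.mem_filter.2 ⟨hlv, lt_of_le_of_ne (hbd GrpI.w lv hlv).2 hne2⟩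
        exact absurd (Finset.le_max' _ lv hmem2) (not_le.2 h)
      have hbelow : ∀ lv ∈ Lemma2.V Γ, lv < a →
          Γ.dcond GrpI.w (d GrpI.w) lv = 0 := by
        intro lv hlv h
        by_contra hne2
        have hp2 : 0 < Γ.dcond GrpI.w (d GrpI.w) lv :=
          lt_of_le_of_ne (hbd GrpI.w lv hlv).1 (Ne.symm hne2)
        have h1 := hth GrpI.w lv hlv a haV h hp2
        rw [h1] at hta
        exact lt_irrefl 1 hta
      have hBfin : (insert (0:ℝ) {v | v ∈ Γ.LVset ∧ v < a}).Finite :=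
        (hfin.subset fun v hv => hv.1).insert 0
      have hBne : (insert (0:ℝ) {v | v ∈ Γ.LVset ∧ v < a}).Nonempty :=
        ⟨0, Set.mem_insert _ _⟩
      set b := sSup (insert (0:ℝ) {v | v ∈ Γ.LVset ∧ v < a}) with hb_def
      have hbmem : b ∈ insert (0:ℝ) {v | v ∈ Γ.LVset ∧ v < a} :=
        Set.Nonempty.csSup_mem hBne hBfin
      have hb0 : 0 ≤ b := le_csSup hBfin.bddAbove (Set.mem_insert _ _)
      have hba : b < a := by
        rcases Set.mem_insert_iff.1 hbmem with h | h
        · rw [h]; exact hapos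
        · exact h.2
      have hbub : ∀ v ∈ Γ.LVset, v < a → v ≤ b := fun v hv h =>
        le_csSup hBfin.bddAbove (Set.mem_insert_iff.2 (Or.inr ⟨hv, h⟩))
      set t := Γ.dcond GrpI.w (d GrpI.w) a with ht_def
      have ht0 : 0 ≤ t := (hbd GrpI.w a haV).1
      set ℓ := a - t * (a - b) with hl_def
      have hℓa : ℓ ≤ a := by nlinarith
      have hbℓ : b < ℓ := by nlinarith
      have hℓ0 : 0 ≤ ℓ := le_trans hb0 hbℓ.le
      have hceil : Γ.lceil ℓ = a := by
        have hfinC : {v | v ∈ Γ.LVset ∧ ℓ ≤ v}.Finite :=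
          hfin.subset fun v hv => hv.1
        have haC : a ∈ {v | v ∈ Γ.LVset ∧ ℓ ≤ v} := ⟨haLV, hℓa⟩
        refine le_antisymm (csInf_le hfinC.bddBelow haC) (le_csInf ⟨a, haC⟩ ?_)
        rintro v ⟨hv1, hv2⟩
        by_contra hcon
        push_neg at hcon
        have := hbub v hv1 hcon
        linarith
      have hceilm : Γ.lceilm ℓ = b := by
        rw [Game.lceilm, hceil]
      have hab : a - b ≠ 0 := sub_ne_zero.2 hba.ne'
      have hratio : (Γ.lceil ℓ - ℓ) / (Γ.lceil ℓ - Γ.lceilm ℓ) = t := by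
        rw [hceil, hceilm, hl_def, div_eq_iff hab]
        ring
      have hℓmax : ℓ ≤ Γ.lmax := le_trans hℓa (le_csSup hfin.bddAbove haLV)
      have hdcb : ∀ lv ∈ Lemma2.V Γ,
          Γ.dcond GrpI.b (d GrpI.b) lv = Γ.dcond GrpI.w (d GrpI.w) lv :=
        fun lv hlv => (hext lv hlv).symm
      have mkA : ∀ i'', (∀ lv ∈ Lemma2.V Γ,
          Γ.dcond i'' (d i'') lv = Γ.dcond GrpI.w (d GrpI.w) lv) →
          Γ.AssociatedWith i'' (d i'') ℓ := by
        intro i'' heq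
        refine ⟨hℓ0, hℓmax, fun lvv hlvvL => ?_⟩
        have hlvvV : lvv ∈ Lemma2.V Γ := (Lemma2.mem_V_iff Γ).2 hlvvL
        refine ⟨fun hgt => ?_, fun heq2 => ?_, fun hltv => ?_⟩
        · rw [heq lvv hlvvV]
          exact habove lvv hlvvV (hceil ▸ hgt)
        · rw [heq lvv hlvvV, hratio, heq2, hceil]
        · rw [heq lvv hlvvV]
          exact hbelow lvv hlvvV (hceil ▸ hltv)
      exact ⟨ℓ, mkA GrpI.w (fun _ _ => rfl), mkA GrpI.b hdcb⟩
  · -- Part 2: fair policies satisfy the equal opportunity constraint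
    rintro d ⟨hdp, ℓ, hw, hb⟩
    refine ⟨hdp, ?_⟩
    rw [Lemma2.TP_eq Γ c d GrpI.w, Lemma2.TP_eq Γ c d GrpI.b,
      Lemma2.partition Γ (fun x => Γ.p GrpI.w x Cls.q * d GrpI.w x),
      Lemma2.partition Γ (fun x => Γ.p GrpI.b x Cls.q * d GrpI.b x)]
    refine Finset.sum_congr rfl fun lv hlv => ?_
    have hlvL : lv ∈ Γ.LVset := (Lemma2.mem_V_iff Γ).1 hlv
    have hwq := (Lemma2.wq_pos Γ hlv).ne'
    have hdc : Γ.dcond GrpI.w (d GrpI.w) lv = Γ.dcond GrpI.b (d GrpI.b) lv := by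
      obtain ⟨-, -, hw3⟩ := hw
      obtain ⟨-, -, hb3⟩ := hb
      rcases lt_trichotomy lv (Γ.lceil ℓ) with h | h | h
      · rw [(hw3 lv hlvL).2.2 h, (hb3 lv hlvL).2.2 h]
      · rw [(hw3 lv hlvL).2.1 h, (hb3 lv hlvL).2.1 h]
      · rw [(hw3 lv hlvL).1 h, (hb3 lv hlvL).1 h]
    rw [Lemma2.dcond_eq, Lemma2.dcond_eq] at hdc
    have hnum : Lemma2.num Γ GrpI.w (d GrpI.w) lv
        = Lemma2.num Γ GrpI.b (d GrpI.b) lv := by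
      field_simp at hdc
      exact hdc
    exact hnum
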